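/- Let N ≥ 1 be an integer and q ∈ ℂ with 0 < |q| < 1, and let τ_N(z) = z^{2/N−2} Θ_{q^{2N}}(q z²)/Θ_{q^{2N}}(q z^{−2}). Then for all x where both sides are defined, τ_N(q^{1/2} x)^{−1} · τ_N(q^{1/2} x^{−1})^{−1} = q^{2−2/N} · Θ_{q^{2N}}(x²) Θ_{q^{2N}}(x^{−2}) / ( Θ_{q^{2N}}(q² x²) Θ_{q^{2N}}(q² x^{−2}) ), where q^{1/2} is a fixed square root of q and the fractional powers are taken with determinations satisfying (q^{1/2}x)^{2/N} · (q^{1/2}x^{−1})^{2/N} = q^{2/N}. -/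

import Mathlib

open Complex

/-- The infinite `q`-Pochhammer product `(z;p)_∞ = ∏_{n≥0} (1 − z pⁿ)`. -/
noncomputable def qPoch (z p : ℂ) : ℂ := ∏' n : ℕ, (1 - z * p ^ n)

/-- The Jacobi theta function `Θ_p(z) = (z;p)_∞ (p z⁻¹;p)_∞ (p;p)_∞`. -/
noncomputable def jTheta (p z : ℂ) : ℂ := qPoch z p * qPoch (p * z⁻¹) p * qPoch p p

/-- The function `τ_N(z) = z^{2/N−2} Θ_{q^{2N}}(q z²)/Θ_{q^{2N}}(q z⁻²)`, the fractional power
`z^{2/N}` being given by the fixed determination `P` (so `z^{2/N−2} = P z · z⁻²`). -/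
noncomputable def tauNP (N : ℕ) (q : ℂ) (P : ℂ → ℂ) (z : ℂ) : ℂ :=
  P z * z ^ (-2 : ℤ) * jTheta (q ^ (2 * N)) (q * z ^ 2) / jTheta (q ^ (2 * N)) (q * z⁻¹ ^ 2)

/-- The identity
`τ_N(q^{1/2}x)⁻¹ τ_N(q^{1/2}x⁻¹)⁻¹ = q^{2−2/N} Θ_{q^{2N}}(x²)Θ_{q^{2N}}(x⁻²) /
(Θ_{q^{2N}}(q²x²)Θ_{q^{2N}}(q²x⁻²))`,
where `sq` is a fixed square root of `q`, `P` is a determination of the power `w ↦ w^{2/N}`,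
`qp` is a determination of `q^{2/N}` (so `q^{2−2/N} = q² qp⁻¹`), and the determinations satisfy
`(q^{1/2}x)^{2/N} (q^{1/2}x⁻¹)^{2/N} = q^{2/N}`. -/
theorem stmt9 (N : ℕ) (hN : 1 ≤ N) (q sq : ℂ)
    (hq0 : 0 < ‖q‖) (hq1 : ‖q‖ < 1) (hsq : sq ^ 2 = q)
    (P : ℂ → ℂ) (hP : ∀ w : ℂ, w ≠ 0 → P w ^ N = w ^ 2)
    (qp : ℂ) (hqp : qp ^ N = q ^ 2)
    (x : ℂ) (hx : x ≠ 0)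
    (hbranch : P (sq * x) * P (sq * x⁻¹) = qp)
    (h1 : jTheta (q ^ (2 * N)) (x ^ 2) ≠ 0)
    (h2 : jTheta (q ^ (2 * N)) (x⁻¹ ^ 2) ≠ 0)
    (h3 : jTheta (q ^ (2 * N)) (q ^ 2 * x ^ 2) ≠ 0)
    (h4 : jTheta (q ^ (2 * N)) (q ^ 2 * x⁻¹ ^ 2) ≠ 0) :
    (tauNP N q P (sq * x))⁻¹ * (tauNP N q P (sq * x⁻¹))⁻¹ =
      q ^ 2 * qp⁻¹ * jTheta (q ^ (2 * N)) (x ^ 2) * jTheta (q ^ (2 * N)) (x⁻¹ ^ 2)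
        / (jTheta (q ^ (2 * N)) (q ^ 2 * x ^ 2) * jTheta (q ^ (2 * N)) (q ^ 2 * x⁻¹ ^ 2)) := by
  have hqne : q ≠ 0 := by
    intro h; simp [h] at hq0
  have hsqne : sq ≠ 0 := by
    intro h; rw [h] at hsq; simp at hsq; exact hqne hsq.symm
  have hqpne : qp ≠ 0 := by
    intro h; rw [h] at hqp
    have : (0:ℂ) ^ N = 0 := zero_pow (by omega)
    rw [this] at hqp
    exact hqne (pow_eq_zero_iff (n := 2) (by norm_num) |>.mp hqp.symm)
  have hP1 : P (sq * x) ≠ 0 := by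
    intro h; rw [h, zero_mul] at hbranch; exact hqpne hbranch.symm
  have hP2 : P (sq * x⁻¹) ≠ 0 := by
    intro h; rw [h, mul_zero] at hbranch; exact hqpne hbranch.symm
  -- rewrite the theta arguments
  have hsx : (sq * x) ^ 2 = q * x ^ 2 := by rw [← hsq]; ring
  have hsx' : (sq * x⁻¹) ^ 2 = q * x⁻¹ ^ 2 := by rw [← hsq]; ring
  have e1 : q * (sq * x) ^ 2 = q ^ 2 * x ^ 2 := by rw [← hsq]; ring
  have e2 : q * (sq * x)⁻¹ ^ 2 = x⁻¹ ^ 2 := by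
    rw [inv_pow, hsx, mul_inv, ← mul_assoc, mul_inv_cancel₀ hqne, one_mul, ← inv_pow]
  have e3 : q * (sq * x⁻¹) ^ 2 = q ^ 2 * x⁻¹ ^ 2 := by rw [← hsq]; ring
  have e4 : q * (sq * x⁻¹)⁻¹ ^ 2 = x ^ 2 := by
    rw [inv_pow, hsx', mul_inv, ← mul_assoc, mul_inv_cancel₀ hqne, one_mul, ← inv_pow, inv_inv]
  rw [tauNP, tauNP, e1, e2, e3, e4]
  have hz1 : (sq * x) ^ (-2 : ℤ) = (q * x ^ 2)⁻¹ := by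
    rw [zpow_neg, show (2:ℤ) = ((2:ℕ):ℤ) from rfl, zpow_natCast, hsx]
  have hz2 : (sq * x⁻¹) ^ (-2 : ℤ) = (q * x⁻¹ ^ 2)⁻¹ := by
    rw [zpow_neg, show (2:ℤ) = ((2:ℕ):ℤ) from rfl, zpow_natCast, hsx']
  rw [hz1, hz2, ← hbranch]
  set T1 := jTheta (q ^ (2 * N)) (x ^ 2) with hT1
  set T2 := jTheta (q ^ (2 * N)) (x⁻¹ ^ 2) with hT2
  set T3 := jTheta (q ^ (2 * N)) (q ^ 2 * x ^ 2) with hT3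
  set T4 := jTheta (q ^ (2 * N)) (q ^ 2 * x⁻¹ ^ 2) with hT4
  set p1 := P (sq * x) with hp1
  set p2 := P (sq * x⁻¹) with hp2
  have hx2 : x ^ 2 ≠ 0 := pow_ne_zero 2 hx
  field_simp [hP1, hP2]
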